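/- Let $s \in \mathbb{N}$ and $\nu \in \mathbb{N}_0^s$ be a multi-index. Then $\sum_{m \le \nu} \binom{\nu}{m}\, \frac{|m|!}{(\ln 2)^{|m|}} \le 2\, \frac{|\nu|!}{(\ln 2)^{|\nu|}}$, where the sum is over all multi-indices $m \in \mathbb{N}_0^s$ with $m_j \le \nu_j$ for all $j$. -/

import Mathlib

open Finset

private lemma nat_Iic_eq_range (a : ℕ) : Finset.Iic a = Finset.range (a + 1) := by
  ext x; simp [Nat.lt_succ_iff]

/-- Real-valued Vandermonde convolution of an arbitrary weight `g`. -/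
private lemma choose_vander_sum (a b : ℕ) (g : ℕ → ℝ) :
    ∑ i ∈ range (a + 1), ∑ k ∈ range (b + 1),
        (a.choose i : ℝ) * ((b.choose k : ℝ) * g (i + k))
      = ∑ k ∈ range (a + b + 1), ((a + b).choose k : ℝ) * g k := by
  set F : ℕ → ℕ → ℝ := fun i k => (a.choose i : ℝ) * ((b.choose k : ℝ) * g (i + k)) with hF
  have key : ∀ i k : ℕ, a + b < i + k → F i k = 0 := by
    intro i k h
    rcases Nat.lt_or_ge a i with hi | hi
    · simp [hF, Nat.choose_eq_zero_of_lt hi]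
    · have hk : b < k := by omega
      simp [hF, Nat.choose_eq_zero_of_lt hk]
  have hR : ∑ k ∈ range (a + b + 1), ((a + b).choose k : ℝ) * g k
      = ∑ m ∈ range (a + b + 1), ∑ i ∈ range (m + 1), F i (m - i) := by
    refine sum_congr rfl fun m _ => ?_
    rw [Nat.add_choose_eq, Nat.cast_sum, sum_mul,
      Finset.Nat.sum_antidiagonal_eq_sum_range_succ_mk]
    refine sum_congr rfl fun i hi => ?_
    have hi' : i + (m - i) = m := Nat.add_sub_cancel' (Nat.lt_succ_iff.mp (mem_range.mp hi))
    simp only [hF, hi']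
    push_cast
    ring
  have inner1 : ∀ m : ℕ, ∑ k ∈ range (a + b + 1 - m), F m k
      = ∑ k ∈ range (a + b + 1), F m k := by
    intro m
    refine sum_subset (range_subset_range.mpr (by omega)) fun k _ hk => ?_
    exact key m k (by simp only [mem_range] at hk ⊢; omega)
  have inner2 : ∀ m : ℕ, ∑ k ∈ range (b + 1), F m k
      = ∑ k ∈ range (a + b + 1), F m k := by
    intro m
    refine sum_subset (range_subset_range.mpr (by omega)) fun k _ hk => ?_
    have hk' : b < k := by simp only [mem_range] at hk; omega
    simp [hF, Nat.choose_eq_zero_of_lt hk']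
  have outer : ∑ m ∈ range (a + 1), ∑ k ∈ range (a + b + 1), F m k
      = ∑ m ∈ range (a + b + 1), ∑ k ∈ range (a + b + 1), F m k := by
    refine sum_subset (range_subset_range.mpr (by omega)) fun m _ hm => ?_
    have hm' : a < m := by simp only [mem_range] at hm; omega
    refine sum_eq_zero fun k _ => ?_
    simp [hF, Nat.choose_eq_zero_of_lt hm']
  calc ∑ i ∈ range (a + 1), ∑ k ∈ range (b + 1), F i k
      = ∑ m ∈ range (a + 1), ∑ k ∈ range (a + b + 1), F m k :=
        sum_congr rfl fun m _ => inner2 m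
    _ = ∑ m ∈ range (a + b + 1), ∑ k ∈ range (a + b + 1), F m k := outer
    _ = ∑ m ∈ range (a + b + 1), ∑ k ∈ range (a + b + 1 - m), F m k :=
        (sum_congr rfl fun m _ => (inner1 m).symm)
    _ = ∑ m ∈ range (a + b + 1), ∑ i ∈ range (m + 1), F i (m - i) :=
        (sum_range_diag_flip (a + b + 1) F).symm
    _ = ∑ k ∈ range (a + b + 1), ((a + b).choose k : ℝ) * g k := hR.symm

/-- Multi-dimensional Vandermonde: summing a weight of `∑ m` over all multi-indices `m ≤ ν`
with multinomial coefficients collapses to binomial coefficients of `∑ ν`. -/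
private lemma keyA : ∀ (s : ℕ) (ν : Fin s → ℕ) (g : ℕ → ℝ),
    ∑ m ∈ Fintype.piFinset (fun j => Finset.Iic (ν j)),
        (∏ j, ((ν j).choose (m j) : ℝ)) * g (∑ j, m j)
      = ∑ k ∈ range ((∑ j, ν j) + 1), ((∑ j, ν j).choose k : ℝ) * g k
  | 0, ν, g => by
    simp
  | (s + 1), ν, g => by
    have hmap : Fintype.piFinset (fun j : Fin (s + 1) => Finset.Iic (ν j))
        = ((Finset.Iic (ν 0)) ×ˢ Fintype.piFinset fun j : Fin s => Finset.Iic (ν j.succ)).map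
            (Fin.consEquiv fun _ : Fin (s + 1) => ℕ).toEmbedding := by
      have := Finset.filter_piFinset_eq_map_consEquiv
        (fun j : Fin (s + 1) => Finset.Iic (ν j)) (fun _ => True)
      simp at this
      exact this
    rw [hmap, Finset.sum_map, Finset.sum_product]
    simp only [Equiv.coe_toEmbedding, Fin.consEquiv_apply, Fin.prod_univ_succ,
      Fin.sum_univ_succ, Fin.cons_zero, Fin.cons_succ]
    have hstep : ∀ x : ℕ,
        ∑ y ∈ Fintype.piFinset fun j : Fin s => Finset.Iic (ν j.succ),
          ((ν 0).choose x : ℝ) * (∏ j : Fin s, ((ν j.succ).choose (y j) : ℝ)) * g (x + ∑ j : Fin s, y j)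
        = ((ν 0).choose x : ℝ) *
            ∑ k ∈ range ((∑ j : Fin s, ν j.succ) + 1),
              (((∑ j : Fin s, ν j.succ)).choose k : ℝ) * g (x + k) := by
      intro x
      rw [← keyA s (fun j => ν j.succ) (fun k => g (x + k)), mul_sum]
      exact sum_congr rfl fun y _ => by ring
    calc ∑ x ∈ Finset.Iic (ν 0),
          ∑ y ∈ Fintype.piFinset fun j : Fin s => Finset.Iic (ν j.succ),
            ((ν 0).choose x : ℝ) * (∏ j : Fin s, ((ν j.succ).choose (y j) : ℝ)) * g (x + ∑ j : Fin s, y j)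
        = ∑ x ∈ range (ν 0 + 1), ∑ k ∈ range ((∑ j : Fin s, ν j.succ) + 1),
            ((ν 0).choose x : ℝ) * ((((∑ j : Fin s, ν j.succ)).choose k : ℝ) * g (x + k)) := by
          rw [nat_Iic_eq_range]
          refine sum_congr rfl fun x _ => ?_
          rw [hstep x, mul_sum]
      _ = ∑ k ∈ range (ν 0 + (∑ j : Fin s, ν j.succ) + 1),
            ((ν 0 + ∑ j : Fin s, ν j.succ).choose k : ℝ) * g k :=
          choose_vander_sum (ν 0) (∑ j : Fin s, ν j.succ) g

/-- Multi-index estimate (equation for `∑_{m ≤ ν} (ν choose m) |m|!/(ln 2)^{|m|}`):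
`∑_{m ≤ ν} (ν choose m) * |m|! / (ln 2)^{|m|} ≤ 2 * |ν|! / (ln 2)^{|ν|}`,
where the sum is over all multi-indices `m : Fin s → ℕ` with `m ≤ ν`. -/
theorem sum_multichoose_factorial_log2_le (s : ℕ) (ν : Fin s → ℕ) :
    ∑ m ∈ Finset.Iic ν,
        (∏ j, (Nat.choose (ν j) (m j) : ℝ)) *
          (Nat.factorial (∑ j, m j) : ℝ) / Real.log 2 ^ (∑ j, m j)
      ≤ 2 * (Nat.factorial (∑ j, ν j) : ℝ) / Real.log 2 ^ (∑ j, ν j) := by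
  set L := Real.log 2 with hLdef
  have hL0 : 0 < L := Real.log_pos one_lt_two
  set n := ∑ j, ν j with hn
  have hIic : (Finset.Iic ν) = Fintype.piFinset (fun j => Finset.Iic (ν j)) := by
    ext m; simp [Pi.le_def, Fintype.mem_piFinset]
  have h1 : ∑ m ∈ Finset.Iic ν,
        (∏ j, (Nat.choose (ν j) (m j) : ℝ)) *
          (Nat.factorial (∑ j, m j) : ℝ) / L ^ (∑ j, m j)
      = ∑ k ∈ range (n + 1), (n.choose k : ℝ) * ((k.factorial : ℝ) / L ^ k) := by
    rw [hIic, ← keyA s ν (fun k => (k.factorial : ℝ) / L ^ k)]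
    exact sum_congr rfl fun m _ => by rw [mul_div_assoc]
  rw [h1]
  have h2 : ∀ k ∈ range (n + 1),
      (n.choose k : ℝ) * ((k.factorial : ℝ) / L ^ k)
        = ((n.factorial : ℝ) / L ^ n) * (L ^ (n - k) / ((n - k).factorial : ℝ)) := by
    intro k hk
    have hkn : k ≤ n := Nat.lt_succ_iff.mp (mem_range.mp hk)
    have hpow : L ^ (n - k) * L ^ k = L ^ n := pow_sub_mul_pow L hkn
    rw [Nat.cast_choose ℝ hkn, ← hpow]
    have h1 : (k.factorial : ℝ) ≠ 0 := Nat.cast_ne_zero.mpr k.factorial_ne_zero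
    have h2 : ((n - k).factorial : ℝ) ≠ 0 := Nat.cast_ne_zero.mpr (n - k).factorial_ne_zero
    have h3 : L ^ k ≠ 0 := by positivity
    have h4 : L ^ (n - k) ≠ 0 := by positivity
    field_simp
  rw [sum_congr rfl h2, ← mul_sum]
  have hreflect : ∑ k ∈ range (n + 1), L ^ (n - k) / ((n - k).factorial : ℝ)
      = ∑ i ∈ range (n + 1), L ^ i / (i.factorial : ℝ) := by
    have := Finset.sum_range_reflect (fun i => L ^ i / (i.factorial : ℝ)) (n + 1)
    simpa using this
  rw [hreflect]
  have hexp : ∑ i ∈ range (n + 1), L ^ i / (i.factorial : ℝ) ≤ 2 := by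
    have := Real.sum_le_exp_of_nonneg hL0.le (n + 1)
    simpa [hLdef, Real.exp_log (by norm_num : (0:ℝ) < 2)] using this
  calc (n.factorial : ℝ) / L ^ n * ∑ i ∈ range (n + 1), L ^ i / (i.factorial : ℝ)
      ≤ (n.factorial : ℝ) / L ^ n * 2 :=
        mul_le_mul_of_nonneg_left hexp (by positivity)
    _ = 2 * (n.factorial : ℝ) / L ^ n := by ring
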